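/- Let S = ⟨S,∧,1⟩ be a meet semilattice with 1 and let T be a complete sublattice of Sub(S). Define c ρ d iff every member X of T containing c also contains d. Then ρ is a distributive quasi-order satisfying: c ρ d₁ and c ρ d₂ imply c ρ (d₁ ∧ d₂); and c ρ 1 for all c. Moreover T consists exactly of the ρ-closed subsemilattices of S. -/

import Mathlib

variable {S : Type*} [SemilatticeInf S] [OrderTop S]

/-- A distributive quasi-order on a meet semilattice with `1`. -/
def IsDistributiveQO (ε : S → S → Prop) : Prop :=
  Reflexive ε ∧ Transitive ε ∧
    (∀ c₁ c₂ d : S, ε (c₁ ⊓ c₂) d → ∃ d₁ d₂, ε c₁ d₁ ∧ ε c₂ d₂ ∧ d = d₁ ⊓ d₂) ∧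
    (∀ d : S, ε ⊤ d → d = ⊤)

/-- A subsemilattice of `S` containing `1`. -/
def IsSub (X : Set S) : Prop :=
  ⊤ ∈ X ∧ ∀ a ∈ X, ∀ b ∈ X, a ⊓ b ∈ X

/-- The subsemilattice generated by a set `A`. -/
def subGen (A : Set S) : Set S :=
  ⋂₀ {X : Set S | IsSub X ∧ A ⊆ X}

lemma my_subset_subGen {A : Set S} : A ⊆ subGen A :=
  fun _ ha _ hX => hX.2 ha

lemma my_subGen_subset {A X : Set S} (hX : IsSub X) (hA : A ⊆ X) : subGen A ⊆ X :=
  fun _ ha => ha X ⟨hX, hA⟩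

lemma my_isSub_top : IsSub ({⊤} : Set S) :=
  ⟨rfl, by rintro a rfl b rfl; simp⟩

lemma my_subGen_empty : subGen (∅ : Set S) = {⊤} := by
  apply Set.Subset.antisymm
  · exact my_subGen_subset my_isSub_top (by simp)
  · rintro a rfl X hX
    exact hX.1.1

/-- Given a complete sublattice `T` of `Sub(S)` (closed under arbitrary
intersections and arbitrary joins of `Sub(S)`), the relation
`c ρ d ⟺ (∀ X ∈ T, c ∈ X → d ∈ X)` is a distributive quasi-order satisfying
conditions (3) and (4), and `T` is exactly the set of `ρ`-closed
subsemilattices. -/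
theorem complete_sublattice_gives_distributive_qo (T : Set (Set S))
    (hsub : ∀ X ∈ T, IsSub X)
    (hmeet : ∀ U ⊆ T, ⋂₀ U ∈ T)
    (hjoin : ∀ U ⊆ T, subGen (⋃₀ U) ∈ T) :
    IsDistributiveQO (fun c d => ∀ X ∈ T, c ∈ X → d ∈ X) ∧
    (∀ c d₁ d₂ : S, (∀ X ∈ T, c ∈ X → d₁ ∈ X) → (∀ X ∈ T, c ∈ X → d₂ ∈ X) →
      ∀ X ∈ T, c ∈ X → d₁ ⊓ d₂ ∈ X) ∧
    (∀ c : S, ∀ X ∈ T, c ∈ X → (⊤ : S) ∈ X) ∧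
    T = {X : Set S | IsSub X ∧
      ∀ c ∈ X, ∀ d, (∀ Y ∈ T, c ∈ Y → d ∈ Y) → d ∈ X} := by
  have hTop : ({⊤} : Set S) ∈ T := by
    have := hjoin ∅ (by simp)
    simpa [my_subGen_empty] using this
  refine ⟨⟨fun c X hX hc => hc, fun a b c hab hbc X hX ha => hbc X hX (hab X hX ha), ?_, ?_⟩,
    fun c d₁ d₂ h₁ h₂ X hX hc => (hsub X hX).2 _ (h₁ X hX hc) _ (h₂ X hX hc),
    fun c X hX _ => (hsub X hX).1, ?_⟩
  · intro c₁ c₂ d h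
    set X₁ := ⋂₀ {X | X ∈ T ∧ c₁ ∈ X} with hX₁
    set X₂ := ⋂₀ {X | X ∈ T ∧ c₂ ∈ X} with hX₂
    have hX₁T : X₁ ∈ T := hmeet _ (fun X hX => hX.1)
    have hX₂T : X₂ ∈ T := hmeet _ (fun X hX => hX.1)
    have hc₁ : c₁ ∈ X₁ := fun X hX => hX.2
    have hc₂ : c₂ ∈ X₂ := fun X hX => hX.2
    have hJ : subGen (X₁ ∪ X₂) ∈ T := by
      have := hjoin {X₁, X₂} (by rintro X (rfl | rfl) <;> assumption)
      simpa [Set.sUnion_pair] using this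
    have hsubJ : IsSub (subGen (X₁ ∪ X₂)) := hsub _ hJ
    have hc₁J : c₁ ∈ subGen (X₁ ∪ X₂) := my_subset_subGen (Or.inl hc₁)
    have hc₂J : c₂ ∈ subGen (X₁ ∪ X₂) := my_subset_subGen (Or.inr hc₂)
    have hdJ : d ∈ subGen (X₁ ∪ X₂) := h _ hJ (hsubJ.2 _ hc₁J _ hc₂J)
    have key : subGen (X₁ ∪ X₂) ⊆ {x | ∃ d₁ ∈ X₁, ∃ d₂ ∈ X₂, x = d₁ ⊓ d₂} := by
      apply my_subGen_subset
      · refine ⟨⟨⊤, (hsub _ hX₁T).1, ⊤, (hsub _ hX₂T).1, by simp⟩, ?_⟩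
        rintro a ⟨a₁, ha₁, a₂, ha₂, rfl⟩ b ⟨b₁, hb₁, b₂, hb₂, rfl⟩
        exact ⟨a₁ ⊓ b₁, (hsub _ hX₁T).2 _ ha₁ _ hb₁, a₂ ⊓ b₂, (hsub _ hX₂T).2 _ ha₂ _ hb₂,
          inf_inf_inf_comm a₁ a₂ b₁ b₂⟩
      · rintro x (hx | hx)
        · exact ⟨x, hx, ⊤, (hsub _ hX₂T).1, by simp⟩
        · exact ⟨⊤, (hsub _ hX₁T).1, x, hx, by simp⟩
    obtain ⟨d₁, hd₁, d₂, hd₂, rfl⟩ := key hdJ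
    exact ⟨d₁, d₂, fun X hX hc => hd₁ X ⟨hX, hc⟩, fun X hX hc => hd₂ X ⟨hX, hc⟩, rfl⟩
  · intro d h
    exact h {⊤} hTop rfl
  · apply Set.Subset.antisymm
    · intro X hX
      exact ⟨hsub X hX, fun c hc d hd => hd X hX hc⟩
    · rintro X ⟨hXsub, hXcl⟩
      set U := (fun c => ⋂₀ {Y | Y ∈ T ∧ c ∈ Y}) '' X with hU
      have hUT : U ⊆ T := by
        rintro _ ⟨c, hc, rfl⟩
        exact hmeet _ (fun Y hY => hY.1)
      have hJ : subGen (⋃₀ U) ∈ T := hjoin U hUT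
      have h1 : ⋃₀ U ⊆ X := by
        rintro x ⟨_, ⟨c, hc, rfl⟩, hx⟩
        exact hXcl c hc x (fun Y hY hcY => hx Y ⟨hY, hcY⟩)
      have h2 : subGen (⋃₀ U) ⊆ X := my_subGen_subset hXsub h1
      have h3 : X ⊆ subGen (⋃₀ U) := by
        intro c hc
        exact my_subset_subGen ⟨_, ⟨c, hc, rfl⟩, fun Y hY => hY.2⟩
      have : X = subGen (⋃₀ U) := Set.Subset.antisymm h3 h2
      rw [this]
      exact hJ
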